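/- In a negative definite plumbing lattice, for every x ∈ L and every characteristic orbit [k] with distinguished minimal representative l'_{[k]}, there exists a unique minimal y ∈ L with x ≤ y and (y + l'_{[k]}, b_j) ≤ 0 for all j. -/

import Mathlib

/-- in a negative definite plumbing lattice, for every `x ∈ L` and
distinguished minimal representative `l'_{[k]}`, there is a unique minimal `y ∈ L`
with `x ≤ y` and `(y + l'_{[k]}, b_j) ≤ 0` for all `j`. -/
theorem exists_unique_minimal_dominating {J : Type*} [Fintype J] [DecidableEq J]
    (B : J → J → ℚ)
    (hsym : ∀ i j, B i j = B j i)
    (hoff : ∀ i j, i ≠ j → B i j = 0 ∨ B i j = 1)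
    (hconn : (SimpleGraph.fromRel fun i j => B i j = 1).Connected)
    (hneg : ∀ x : J → ℚ, x ≠ 0 → ∑ i, ∑ j, x i * B i j * x j < 0)
    (l'k : J → ℚ)
    (hS : ∀ j, ∑ i, l'k i * B i j ≤ 0)
    (hmin : ∀ z : J → ℤ, (∀ j, ∑ i, (l'k i + z i) * B i j ≤ 0) → ∀ i, (0 : ℤ) ≤ z i)
    (x : J → ℤ) :
    ∃! y : J → ℤ,
      ((∀ j, x j ≤ y j) ∧ (∀ j, ∑ i, ((y i : ℚ) + l'k i) * B i j ≤ 0)) ∧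
      ∀ z : J → ℤ, (∀ j, x j ≤ z j) → (∀ j, ∑ i, ((z i : ℚ) + l'k i) * B i j ≤ 0) →
        ∀ j, y j ≤ z j := by
  classical
  rcases isEmpty_or_nonempty J with hJ | hJ
  · refine ⟨x, ⟨⟨fun j => le_refl _, fun j => (IsEmpty.false j).elim⟩,
      fun z hz _ j => (IsEmpty.false j).elim⟩, fun z _ => Subsingleton.elim _ _⟩
  -- off-diagonal entries are nonnegative
  have hB0 : ∀ i j, i ≠ j → 0 ≤ B i j := by
    intro i j hij
    rcases hoff i j hij with h | h <;> rw [h] <;> norm_num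
  -- comparison lemma
  have hcomp : ∀ (m w : J → ℚ), (∀ i, m i ≤ w i) → ∀ j, m j = w j →
      ∑ i, m i * B i j ≤ ∑ i, w i * B i j := by
    intro m w hle j hj
    apply Finset.sum_le_sum
    intro i _
    by_cases h : i = j
    · subst h; rw [hj]
    · exact mul_le_mul_of_nonneg_right (hle i) (hB0 i j h)
  -- existence of u with ∑ i, u i * B i j = -1 for all j
  obtain ⟨u, hu⟩ : ∃ u : J → ℚ, ∀ j, ∑ i, u i * B i j = -1 := by
    have hinj : Function.Injective ((Matrix.of B).transpose.mulVecLin) := by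
      rw [← LinearMap.ker_eq_bot, LinearMap.ker_eq_bot']
      intro v hv
      by_contra hv0
      have h1 := hneg v hv0
      have h2 : ∑ i, ∑ j, v i * B i j * v j = 0 := by
        rw [Finset.sum_comm]
        have : ∀ j, ∑ i, v i * B i j * v j = ((Matrix.of B).transpose.mulVecLin v j) * v j := by
          intro j
          simp [Matrix.mulVecLin, Matrix.mulVec, Matrix.vecMul, dotProduct, Finset.sum_mul]
        simp only [this, hv]
        simp
      rw [h2] at h1
      exact lt_irrefl _ h1
    have hsurj := (LinearMap.injective_iff_surjective).mp hinj
    obtain ⟨u, hu⟩ := hsurj (fun _ => -1)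
    refine ⟨u, fun j => ?_⟩
    have := congrFun hu j
    simp [Matrix.mulVecLin, Matrix.mulVec, dotProduct] at this
    rw [← this]
    apply Finset.sum_congr rfl
    intro i _
    rfl
  -- u is nonnegative
  have hu_nonneg : ∀ i, 0 ≤ u i := by
    by_contra hcon
    push_neg at hcon
    obtain ⟨i0, hi0⟩ := hcon
    set w : J → ℚ := fun i => min (u i) 0 with hwdef
    have hw0 : w ≠ 0 := by
      intro h
      have := congrFun h i0
      simp [hwdef] at this
      exact absurd this (not_le.mpr hi0)
    have hWle : ∀ i, w i ≤ 0 := fun i => min_le_right _ _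
    have hWu : ∀ i, w i ≤ u i := fun i => min_le_left _ _
    have hS1 : ∑ i, ∑ j, w i * B i j * w j < 0 := hneg w hw0
    have hS2 : ∑ j, ∑ i, (u i - w i) * B i j * w j ≤ 0 := by
      apply Finset.sum_nonpos
      intro j _
      apply Finset.sum_nonpos
      intro i _
      by_cases h : i = j
      · subst h
        rcases le_or_gt 0 (u i) with h' | h'
        · have : w i = 0 := min_eq_right h'
          rw [this]; simp
        · have : w i = u i := min_eq_left h'.le
          rw [this]; simp
      · have h1 : 0 ≤ u i - w i := sub_nonneg.mpr (hWu i)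
        have h2 : 0 ≤ B i j := hB0 i j h
        have h3 : w j ≤ 0 := hWle j
        exact mul_nonpos_of_nonneg_of_nonpos (mul_nonneg h1 h2) h3
    have key : ∑ j, (-1 : ℚ) * w j = ∑ j, ∑ i, w i * B i j * w j
        + ∑ j, ∑ i, (u i - w i) * B i j * w j := by
      rw [← Finset.sum_add_distrib]
      apply Finset.sum_congr rfl
      intro j _
      rw [← Finset.sum_add_distrib, ← hu j, Finset.sum_mul]
      apply Finset.sum_congr rfl
      intro i _
      ring
    have hL : 0 ≤ ∑ j, (-1 : ℚ) * w j := by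
      apply Finset.sum_nonneg
      intro j _
      simpa using neg_nonneg.mpr (hWle j)
    rw [key] at hL
    have : ∑ j, ∑ i, w i * B i j * w j < 0 := by
      calc ∑ j, ∑ i, w i * B i j * w j = ∑ i, ∑ j, w i * B i j * w j := Finset.sum_comm
        _ < 0 := hS1
    linarith
  -- u is positive
  have hu_pos : ∀ i, 0 < u i := by
    intro i
    rcases (hu_nonneg i).lt_or_eq with h | h
    · exact h
    · exfalso
      have h1 := hu i
      have h2 : 0 ≤ ∑ j, u j * B j i := by
        apply Finset.sum_nonneg
        intro j _
        by_cases hji : j = i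
        · subst hji; rw [← h]; simp
        · exact mul_nonneg (hu_nonneg j) (hB0 j i hji)
      rw [h1] at h2
      norm_num at h2
  -- choose N large
  obtain ⟨N, hN⟩ := exists_nat_ge (max
    (Finset.univ.sup' (Finset.univ_nonempty) (fun j => ∑ i, |B i j|))
    (Finset.univ.sup' (Finset.univ_nonempty) (fun i => ((x i : ℚ) + l'k i) / u i)))
  have hN1 : ∀ j, ∑ i, |B i j| ≤ (N : ℚ) := fun j =>
    le_trans (le_trans (Finset.le_sup' (f := fun j => ∑ i, |B i j|) (Finset.mem_univ j)) (le_max_left _ _)) hN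
  have hN2 : ∀ i, ((x i : ℚ) + l'k i) / u i ≤ (N : ℚ) := fun i =>
    le_trans (le_trans (Finset.le_sup' (f := fun i => ((x i : ℚ) + l'k i) / u i) (Finset.mem_univ i)) (le_max_right _ _)) hN
  -- the feasible set
  set P : (J → ℤ) → Prop := fun y =>
    (∀ j, x j ≤ y j) ∧ (∀ j, ∑ i, ((y i : ℚ) + l'k i) * B i j ≤ 0) with hPdef
  -- P is nonempty
  have hPne : ∃ y, P y := by
    refine ⟨fun i => ⌈(N : ℚ) * u i - l'k i⌉, ?_, ?_⟩
    · intro j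
      have h1 : ((x j : ℚ) + l'k j) ≤ (N : ℚ) * u j := by
        have := hN2 j
        rw [div_le_iff₀ (hu_pos j)] at this
        linarith
      have h2 : (x j : ℚ) ≤ (⌈(N : ℚ) * u j - l'k j⌉ : ℚ) :=
        le_trans (by linarith) (Int.le_ceil _)
      exact_mod_cast h2
    · intro j
      have hterm : ∀ i, ((⌈(N : ℚ) * u i - l'k i⌉ : ℚ) + l'k i) * B i j
          ≤ (N : ℚ) * u i * B i j + |B i j| := by
        intro i
        have hc1 : (N : ℚ) * u i ≤ (⌈(N : ℚ) * u i - l'k i⌉ : ℚ) + l'k i := by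
          linarith [Int.le_ceil ((N : ℚ) * u i - l'k i)]
        have hc2 : (⌈(N : ℚ) * u i - l'k i⌉ : ℚ) + l'k i ≤ (N : ℚ) * u i + 1 := by
          linarith [Int.ceil_lt_add_one ((N : ℚ) * u i - l'k i)]
        rcases le_or_gt 0 (B i j) with hb | hb
        · calc ((⌈(N : ℚ) * u i - l'k i⌉ : ℚ) + l'k i) * B i j
              ≤ ((N : ℚ) * u i + 1) * B i j := mul_le_mul_of_nonneg_right hc2 hb
            _ = (N : ℚ) * u i * B i j + B i j := by ring
            _ ≤ (N : ℚ) * u i * B i j + |B i j| := by linarith [le_abs_self (B i j)]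
        · calc ((⌈(N : ℚ) * u i - l'k i⌉ : ℚ) + l'k i) * B i j
              ≤ (N : ℚ) * u i * B i j := by nlinarith
            _ ≤ (N : ℚ) * u i * B i j + |B i j| := by linarith [abs_nonneg (B i j)]
      calc ∑ i, ((⌈(N : ℚ) * u i - l'k i⌉ : ℚ) + l'k i) * B i j
          ≤ ∑ i, ((N : ℚ) * u i * B i j + |B i j|) := Finset.sum_le_sum (fun i _ => hterm i)
        _ = (N : ℚ) * ∑ i, u i * B i j + ∑ i, |B i j| := by
            rw [Finset.sum_add_distrib, Finset.mul_sum]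
            congr 1
            apply Finset.sum_congr rfl
            intro i _
            ring
        _ = -(N : ℚ) + ∑ i, |B i j| := by rw [hu j]; ring
        _ ≤ 0 := by linarith [hN1 j]
  -- coordinatewise least element
  have hleast : ∀ j : J, ∃ n : ℤ, (∃ y, P y ∧ y j = n) ∧ ∀ m : ℤ, (∃ y, P y ∧ y j = m) → n ≤ m := by
    intro j
    obtain ⟨lb, hlb1, hlb2⟩ := Int.exists_least_of_bdd (P := fun n => ∃ y, P y ∧ y j = n)
      ⟨x j, by rintro z ⟨y, hy, rfl⟩; exact hy.1 j⟩
      (by obtain ⟨y, hy⟩ := hPne; exact ⟨y j, y, hy, rfl⟩)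
    exact ⟨lb, hlb1, hlb2⟩
  choose m hm1 hm2 using hleast
  -- m is feasible
  have hmP : P m := by
    constructor
    · intro j
      obtain ⟨y, hy, hyj⟩ := hm1 j
      rw [← hyj] at *
      exact le_trans (hy.1 j) (le_of_eq hyj.symm) |>.trans (le_refl _)
    · intro j
      obtain ⟨w, hw, hwj⟩ := hm1 j
      have hle : ∀ i, ((m i : ℚ) + l'k i) ≤ ((w i : ℚ) + l'k i) := by
        intro i
        have : m i ≤ w i := hm2 i (w i) ⟨w, hw, rfl⟩
        have : (m i : ℚ) ≤ (w i : ℚ) := by exact_mod_cast this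
        linarith
      have heq : ((m j : ℚ) + l'k j) = ((w j : ℚ) + l'k j) := by rw [hwj]
      exact le_trans (hcomp _ _ hle j heq) (hw.2 j)
  refine ⟨m, ⟨hmP, ?_⟩, ?_⟩
  · intro z hz1 hz2 j
    exact hm2 j (z j) ⟨z, ⟨hz1, hz2⟩, rfl⟩
  · rintro z ⟨hzP, hzmin⟩
    funext j
    exact le_antisymm (hzmin m hmP.1 hmP.2 j) (hm2 j (z j) ⟨z, hzP, rfl⟩)
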